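/- If the degree-coloring index τ is a monotone function on the set of all multigraphs (i.e., τ(H) ≤ τ(G) whenever H is a sub-multigraph of G), then for every multigraph G, τ(G) = max(Δ(G), ω(G)). -/

import Mathlib

open Finset

/-- A multigraph: a finite vertex type, a finite edge type, an endpoints map
into unordered pairs of vertices, and no loops. -/
structure Multigraph where
  V : Type
  E : Type
  fintypeV : Fintype V
  decEqV : DecidableEq V
  fintypeE : Fintype E
  decEqE : DecidableEq E
  ends : E → Sym2 V
  noLoops : ∀ e, ¬ (ends e).IsDiag

attribute [instance] Multigraph.fintypeV Multigraph.decEqV Multigraph.fintypeE Multigraph.decEqE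

namespace Multigraph

open scoped Classical

variable (G : Multigraph)

/-- The degree of a vertex: the number of edges incident to it. -/
noncomputable def degree (x : G.V) : ℕ :=
  (Finset.univ.filter fun e => x ∈ G.ends e).card

/-- The maximum vertex degree Δ(G). -/
noncomputable def maxDegree : ℕ :=
  Finset.univ.sup fun x : G.V => G.degree x

/-- E(S): the edges with both endpoints in S. -/
noncomputable def edgesIn (S : Finset G.V) : Finset G.E :=
  Finset.univ.filter fun e => ∀ x ∈ G.ends e, x ∈ S

/-- Ceiling division of natural numbers: ⌈a / b⌉. -/
def ceilDiv (a b : ℕ) : ℕ := (a + b - 1) / b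

/-- The density ω(G) = max over vertex subsets S with |S| ≥ 2 of ⌈|E(S)| / ⌊|S|/2⌋⌉. -/
noncomputable def density : ℕ :=
  (Finset.univ.powerset.filter fun S : Finset G.V => 2 ≤ S.card).sup
    fun S => ceilDiv (G.edgesIn S).card (S.card / 2)

/-- A proper edge-coloring with colors `Fin c`: adjacent (distinct, sharing an endpoint)
edges receive distinct colors. -/
def IsProperEdgeColoring (c : ℕ) (col : G.E → Fin c) : Prop :=
  ∀ e f : G.E, e ≠ f → (∃ x : G.V, x ∈ G.ends e ∧ x ∈ G.ends f) → col e ≠ col f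

/-- The chromatic index χ'(G): the least number of colors in a proper edge-coloring. -/
noncomputable def chromaticIndex : ℕ :=
  sInf {c : ℕ | ∃ col : G.E → Fin c, G.IsProperEdgeColoring c col}

/-- μ(x): the set of colors used on the edges incident to x. -/
noncomputable def mu {c : ℕ} (col : G.E → Fin c) (x : G.V) : Finset (Fin c) :=
  (Finset.univ.filter fun e => x ∈ G.ends e).image col

/-- A degree-coloring with c colors: the degree condition and the cover condition. -/
def IsDegreeColoring (c : ℕ) (μ : G.V → Finset (Fin c)) : Prop :=
  (∀ x : G.V, (μ x).card = G.degree x) ∧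
  ∀ S : Finset G.V,
    (G.edgesIn S).card ≤ ∑ i : Fin c, (S.filter fun x => i ∈ μ x).card / 2

/-- The degree-coloring index τ(G): the least c admitting a degree-coloring. -/
noncomputable def tau : ℕ :=
  sInf {c : ℕ | ∃ μ : G.V → Finset (Fin c), G.IsDegreeColoring c μ}

/-- A matching: a set of pairwise non-adjacent edges. -/
def IsMatching (M : Finset G.E) : Prop :=
  ∀ e ∈ M, ∀ f ∈ M, e ≠ f → ∀ x : G.V, ¬ (x ∈ G.ends e ∧ x ∈ G.ends f)

/-- π(F): the maximum size of a matching consisting of edges from F. -/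
noncomputable def matchingNumber (F : Finset G.E) : ℕ :=
  (F.powerset.filter fun M => G.IsMatching M).sup Finset.card

/-- ω*(G) = max over nonempty F ⊆ E of ⌈|F| / π(F)⌉. -/
noncomputable def omegaStar : ℕ :=
  (Finset.univ.powerset.filter fun F : Finset G.E => F.Nonempty).sup
    fun F => ceilDiv F.card (G.matchingNumber F)

/-- H is a sub-multigraph of G. -/
def IsSub (H G : Multigraph) : Prop :=
  ∃ (f : H.V ↪ G.V) (g : H.E ↪ G.E),
    ∀ e : H.E, G.ends (g e) = (H.ends e).map f

/-- H is an induced sub-multigraph of G: additionally every edge of G with both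
endpoints in the image of the vertex embedding comes from H. -/
def IsInducedSub (H G : Multigraph) : Prop :=
  ∃ (f : H.V ↪ G.V) (g : H.E ↪ G.E),
    (∀ e : H.E, G.ends (g e) = (H.ends e).map f) ∧
    ∀ e' : G.E, (∀ x ∈ G.ends e', x ∈ Set.range f) → e' ∈ Set.range g

/-- Regularization: if G is regular with ω(G) ≤ Δ(G), R(G) = G; otherwise take two
disjoint copies of G and join each vertex x to its copy by
max(Δ(G), ω(G)) − deg_G(x) parallel edges. -/
noncomputable def regularize (G : Multigraph) : Multigraph :=
  if (∀ x : G.V, G.degree x = G.maxDegree) ∧ G.density ≤ G.maxDegree then G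
  else
    { V := G.V ⊕ G.V
      E := G.E ⊕ G.E ⊕ (Σ x : G.V, Fin (max G.maxDegree G.density - G.degree x))
      fintypeV := inferInstance
      decEqV := inferInstance
      fintypeE := inferInstance
      decEqE := inferInstance
      ends := fun e =>
        match e with
        | Sum.inl e => (G.ends e).map Sum.inl
        | Sum.inr (Sum.inl e) => (G.ends e).map Sum.inr
        | Sum.inr (Sum.inr p) => s(Sum.inl p.1, Sum.inr p.1)
      noLoops := by
        rintro (e | e | p)
        · rw [Sym2.isDiag_map Sum.inl_injective]; exact G.noLoops e
        · rw [Sym2.isDiag_map Sum.inr_injective]; exact G.noLoops e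
        · rw [Sym2.mk_isDiag_iff]; simp }

section Aux

lemma ceilDiv_le' {a b k : ℕ} (hb : 0 < b) : ceilDiv a b ≤ k ↔ a ≤ k * b := by
  unfold ceilDiv
  rw [Nat.div_le_iff_le_mul_add_pred hb, Nat.mul_comm]
  omega

lemma sym2_cases {α : Type*} (p : Sym2 α) : ∃ x y, p = s(x, y) :=
  Sym2.ind (fun x y => ⟨x, y, rfl⟩) p

lemma ends_pair (e : G.E) : ∃ x y : G.V, x ≠ y ∧ G.ends e = s(x, y) := by
  obtain ⟨x, y, hxy⟩ := sym2_cases (G.ends e)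
  refine ⟨x, y, ?_, hxy⟩
  have h := G.noLoops e
  rw [hxy, Sym2.mk_isDiag_iff] at h
  exact h

lemma degree_le_maxDegree (x : G.V) : G.degree x ≤ G.maxDegree :=
  Finset.le_sup (Finset.mem_univ x)

lemma edgesIn_card_ge_two {S : Finset G.V} {e : G.E} (he : e ∈ G.edgesIn S) :
    2 ≤ S.card := by
  obtain ⟨x, y, hxy, hE⟩ := G.ends_pair e
  rw [edgesIn, Finset.mem_filter] at he
  have hx : x ∈ S := he.2 x (by rw [hE]; exact Sym2.mem_mk_left x y)
  have hy : y ∈ S := he.2 y (by rw [hE]; exact Sym2.mem_mk_right x y)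
  calc 2 = ({x, y} : Finset G.V).card := (Finset.card_pair hxy).symm
    _ ≤ S.card := Finset.card_le_card (by
        intro z hz
        simp only [Finset.mem_insert, Finset.mem_singleton] at hz
        rcases hz with rfl | rfl <;> assumption)

lemma edgesIn_card_le (S : Finset G.V) :
    (G.edgesIn S).card ≤ G.density * (S.card / 2) := by
  by_cases h2 : 2 ≤ S.card
  · have hpos : 0 < S.card / 2 := by omega
    have hmem : S ∈ Finset.univ.powerset.filter fun S : Finset G.V => 2 ≤ S.card := by
      simp [h2]
    have hle : ceilDiv (G.edgesIn S).card (S.card / 2) ≤ G.density :=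
      Finset.le_sup (f := fun S => ceilDiv (G.edgesIn S).card (S.card / 2)) hmem
    rwa [ceilDiv_le' hpos] at hle
  · have h0 : G.edgesIn S = ∅ := by
      rw [Finset.eq_empty_iff_forall_notMem]
      intro e he
      exact h2 (G.edgesIn_card_ge_two he)
    simp [h0]


lemma maxDegree_le_of_coloring {c : ℕ} {μ : G.V → Finset (Fin c)}
    (h : G.IsDegreeColoring c μ) : G.maxDegree ≤ c := by
  apply Finset.sup_le
  intro x _
  rw [← h.1 x]
  calc (μ x).card ≤ (Finset.univ : Finset (Fin c)).card :=
        Finset.card_le_card (Finset.subset_univ _)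
    _ = c := by simp

lemma density_le_of_coloring {c : ℕ} {μ : G.V → Finset (Fin c)}
    (h : G.IsDegreeColoring c μ) : G.density ≤ c := by
  apply Finset.sup_le
  intro S hS
  rw [Finset.mem_filter] at hS
  have hpos : 0 < S.card / 2 := by omega
  rw [ceilDiv_le' hpos]
  calc (G.edgesIn S).card ≤ ∑ i : Fin c, (S.filter fun x => i ∈ μ x).card / 2 := h.2 S
    _ ≤ ∑ _i : Fin c, S.card / 2 :=
        Finset.sum_le_sum fun i _ => Nat.div_le_div_right (Finset.card_filter_le _ _)
    _ = c * (S.card / 2) := by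
        rw [Finset.sum_const, Finset.card_univ, Fintype.card_fin, smul_eq_mul]

lemma coloring_exists : ∃ c, ∃ μ : G.V → Finset (Fin c), G.IsDegreeColoring c μ := by
  classical
  let n := Fintype.card G.E
  let idx : G.E ≃ Fin n := Fintype.equivFin G.E
  refine ⟨n, fun x => (Finset.univ.filter fun e => x ∈ G.ends e).image idx, ?_, ?_⟩
  · intro x
    rw [Finset.card_image_of_injective _ idx.injective]
    rfl
  · intro S
    have key : ∀ e ∈ G.edgesIn S,
        1 ≤ (S.filter fun x =>
          idx e ∈ (Finset.univ.filter fun e' => x ∈ G.ends e').image idx).card / 2 := by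
      intro e he
      obtain ⟨x, y, hxy, hE⟩ := G.ends_pair e
      rw [edgesIn, Finset.mem_filter] at he
      have hxe : x ∈ G.ends e := by rw [hE]; exact Sym2.mem_mk_left x y
      have hye : y ∈ G.ends e := by rw [hE]; exact Sym2.mem_mk_right x y
      have hsub : ({x, y} : Finset G.V) ⊆ S.filter fun z =>
          idx e ∈ (Finset.univ.filter fun e' => z ∈ G.ends e').image idx := by
        intro z hz
        simp only [Finset.mem_insert, Finset.mem_singleton] at hz
        rcases hz with rfl | rfl <;>
          · refine Finset.mem_filter.2 ⟨he.2 _ (by assumption), ?_⟩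
            exact Finset.mem_image.2 ⟨e, Finset.mem_filter.2 ⟨Finset.mem_univ _, by assumption⟩, rfl⟩
      have h2 : 2 ≤ (S.filter fun z =>
          idx e ∈ (Finset.univ.filter fun e' => z ∈ G.ends e').image idx).card := by
        calc 2 = ({x, y} : Finset G.V).card := (Finset.card_pair hxy).symm
          _ ≤ _ := Finset.card_le_card hsub
      omega
    calc (G.edgesIn S).card = ∑ _e ∈ G.edgesIn S, 1 := by simp
      _ ≤ ∑ e ∈ G.edgesIn S, (S.filter fun x =>
            idx e ∈ (Finset.univ.filter fun e' => x ∈ G.ends e').image idx).card / 2 :=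
          Finset.sum_le_sum key
      _ ≤ ∑ e : G.E, (S.filter fun x =>
            idx e ∈ (Finset.univ.filter fun e' => x ∈ G.ends e').image idx).card / 2 :=
          Finset.sum_le_sum_of_subset (Finset.subset_univ _)
      _ = ∑ i : Fin n, (S.filter fun x =>
            i ∈ (Finset.univ.filter fun e' => x ∈ G.ends e').image idx).card / 2 :=
          Fintype.sum_equiv idx _ _ (fun e => rfl)

lemma card_filter_sumType {α β : Type*} [Fintype α] [Fintype β]
    (p : α ⊕ β → Prop) [DecidablePred p] :
    (Finset.univ.filter p).card
      = (Finset.univ.filter fun a => p (Sum.inl a)).card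
        + (Finset.univ.filter fun b => p (Sum.inr b)).card := by
  rw [Finset.card_filter, Finset.card_filter, Finset.card_filter, Fintype.sum_sum_type]

lemma card_filter_sigmaType {α : Type*} [Fintype α] {n : α → ℕ}
    (p : (Σ x : α, Fin (n x)) → Prop) [DecidablePred p] :
    (Finset.univ.filter p).card
      = ∑ x : α, (Finset.univ.filter fun i : Fin (n x) => p ⟨x, i⟩).card := by
  rw [Finset.card_filter, ← Finset.univ_sigma_univ, Finset.sum_sigma]
  exact Finset.sum_congr rfl fun x _ => (Finset.card_filter _ _).symm

/-- Two disjoint copies of `G`, with each vertex joined to its copy by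
`max Δ ω - deg` parallel edges. -/
noncomputable abbrev double (G : Multigraph) : Multigraph where
  V := G.V ⊕ G.V
  E := G.E ⊕ G.E ⊕ (Σ x : G.V, Fin (max G.maxDegree G.density - G.degree x))
  fintypeV := inferInstance
  decEqV := inferInstance
  fintypeE := inferInstance
  decEqE := inferInstance
  ends := fun e =>
    match e with
    | Sum.inl e => (G.ends e).map Sum.inl
    | Sum.inr (Sum.inl e) => (G.ends e).map Sum.inr
    | Sum.inr (Sum.inr p) => s(Sum.inl p.1, Sum.inr p.1)
  noLoops := by
    rintro (e | e | p)
    · rw [Sym2.isDiag_map Sum.inl_injective]; exact G.noLoops e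
    · rw [Sym2.isDiag_map Sum.inr_injective]; exact G.noLoops e
    · rw [Sym2.mk_isDiag_iff]; simp

@[simp] lemma double_ends_inl (e : G.E) :
    (G.double).ends (Sum.inl e) = (G.ends e).map Sum.inl := rfl

@[simp] lemma double_ends_inrl (e : G.E) :
    (G.double).ends (Sum.inr (Sum.inl e)) = (G.ends e).map Sum.inr := rfl

@[simp] lemma double_ends_inrr
    (p : Σ x : G.V, Fin (max G.maxDegree G.density - G.degree x)) :
    (G.double).ends (Sum.inr (Sum.inr p)) = s(Sum.inl p.1, Sum.inr p.1) := rfl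

lemma isSub_double : G.IsSub G.double :=
  ⟨⟨Sum.inl, Sum.inl_injective⟩, ⟨Sum.inl, Sum.inl_injective⟩, fun _ => rfl⟩

lemma double_degree (v : (G.double).V) :
    (G.double).degree v = max G.maxDegree G.density := by
  classical
  cases v with
  | inl x =>
    have hdx : G.degree x ≤ max G.maxDegree G.density :=
      le_trans (G.degree_le_maxDegree x) (le_max_left _ _)
    rw [degree]
    show (Finset.univ.filter fun e : G.E ⊕ (G.E ⊕ Σ y : G.V,
        Fin (max G.maxDegree G.density - G.degree y)) =>
        Sum.inl x ∈ (G.double).ends e).card = _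
    rw [card_filter_sumType, card_filter_sumType]
    rw [card_filter_sigmaType]
    have h1 : (Finset.univ.filter fun e : G.E =>
        Sum.inl x ∈ (G.double).ends (Sum.inl e)).card = G.degree x := by
      rw [degree]
      congr 1
      ext e
      simp [Sym2.mem_map]
    have h2 : (Finset.univ.filter fun e : G.E =>
        Sum.inl x ∈ (G.double).ends (Sum.inr (Sum.inl e))).card = 0 := by
      rw [Finset.card_eq_zero, Finset.eq_empty_iff_forall_notMem]
      intro e he
      rw [Finset.mem_filter, double_ends_inrl, Sym2.mem_map] at he
      obtain ⟨_, _, h⟩ := he.2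
      exact Sum.inl_ne_inr h.symm
    have h3 : ∀ y : G.V, (Finset.univ.filter fun i : Fin (max G.maxDegree G.density - G.degree y) =>
        Sum.inl x ∈ (G.double).ends (Sum.inr (Sum.inr ⟨y, i⟩))).card
        = if x = y then max G.maxDegree G.density - G.degree y else 0 := by
      intro y
      by_cases hxy : x = y
      · subst hxy
        rw [if_pos rfl]
        rw [Finset.filter_true_of_mem (fun i _ => by simp)]
        simp
      · rw [if_neg hxy]
        rw [Finset.card_eq_zero, Finset.eq_empty_iff_forall_notMem]
        intro i hi
        rw [Finset.mem_filter, double_ends_inrr, Sym2.mem_iff] at hi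
        rcases hi.2 with h | h
        · exact hxy (Sum.inl_injective h)
        · exact Sum.inl_ne_inr h
    rw [h1, h2]
    rw [Finset.sum_congr rfl fun y _ => h3 y]
    rw [Finset.sum_ite_eq]
    simp only [Finset.mem_univ, if_true]
    omega
  | inr x =>
    have hdx : G.degree x ≤ max G.maxDegree G.density :=
      le_trans (G.degree_le_maxDegree x) (le_max_left _ _)
    rw [degree]
    show (Finset.univ.filter fun e : G.E ⊕ (G.E ⊕ Σ y : G.V,
        Fin (max G.maxDegree G.density - G.degree y)) =>
        Sum.inr x ∈ (G.double).ends e).card = _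
    rw [card_filter_sumType, card_filter_sumType]
    rw [card_filter_sigmaType]
    have h1 : (Finset.univ.filter fun e : G.E =>
        Sum.inr x ∈ (G.double).ends (Sum.inr (Sum.inl e))).card = G.degree x := by
      rw [degree]
      congr 1
      ext e
      simp [Sym2.mem_map]
    have h2 : (Finset.univ.filter fun e : G.E =>
        Sum.inr x ∈ (G.double).ends (Sum.inl e)).card = 0 := by
      rw [Finset.card_eq_zero, Finset.eq_empty_iff_forall_notMem]
      intro e he
      rw [Finset.mem_filter, double_ends_inl, Sym2.mem_map] at he
      obtain ⟨_, _, h⟩ := he.2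
      exact Sum.inl_ne_inr h
    have h3 : ∀ y : G.V, (Finset.univ.filter fun i : Fin (max G.maxDegree G.density - G.degree y) =>
        Sum.inr x ∈ (G.double).ends (Sum.inr (Sum.inr ⟨y, i⟩))).card
        = if x = y then max G.maxDegree G.density - G.degree y else 0 := by
      intro y
      by_cases hxy : x = y
      · subst hxy
        rw [if_pos rfl]
        rw [Finset.filter_true_of_mem (fun i _ => by simp)]
        simp
      · rw [if_neg hxy]
        rw [Finset.card_eq_zero, Finset.eq_empty_iff_forall_notMem]
        intro i hi
        rw [Finset.mem_filter, double_ends_inrr, Sym2.mem_iff] at hi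
        rcases hi.2 with h | h
        · exact Sum.inl_ne_inr h.symm
        · exact hxy (Sum.inr_injective h)
    rw [h1, h2]
    rw [Finset.sum_congr rfl fun y _ => h3 y]
    rw [Finset.sum_ite_eq]
    simp only [Finset.mem_univ, if_true]
    omega

lemma double_cover (S : Finset (G.double).V) :
    ((G.double).edgesIn S).card ≤ (max G.maxDegree G.density) * (S.card / 2) := by
  classical
  set k := max G.maxDegree G.density with hk
  set A : Finset G.V := Finset.univ.filter (fun x => Sum.inl x ∈ S) with hA
  set B : Finset G.V := Finset.univ.filter (fun x => Sum.inr x ∈ S) with hB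
  set T : Finset G.V := A ∩ B with hT
  have hTA : T ⊆ A := Finset.inter_subset_left
  have hTB : T ⊆ B := Finset.inter_subset_right
  -- cardinality of S
  have hScard : S.card = A.card + B.card := by
    have h := card_filter_sumType (fun v : G.V ⊕ G.V => v ∈ S)
    rwa [Finset.filter_univ_mem] at h
  -- decomposition of the edge count
  have hEcard : ((G.double).edgesIn S).card
      = (G.edgesIn A).card + (G.edgesIn B).card + ∑ x ∈ T, (k - G.degree x) := by
    rw [edgesIn]
    show (Finset.univ.filter fun e : G.E ⊕ (G.E ⊕ Σ y : G.V, Fin (k - G.degree y)) =>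
        ∀ v ∈ (G.double).ends e, v ∈ S).card = _
    rw [card_filter_sumType, card_filter_sumType, card_filter_sigmaType]
    have e1 : (Finset.univ.filter fun e : G.E =>
        ∀ v ∈ (G.double).ends (Sum.inl e), v ∈ S) = G.edgesIn A := by
      ext e
      simp [edgesIn, hA, Sym2.mem_map]
    have e2 : (Finset.univ.filter fun e : G.E =>
        ∀ v ∈ (G.double).ends (Sum.inr (Sum.inl e)), v ∈ S) = G.edgesIn B := by
      ext e
      simp [edgesIn, hB, Sym2.mem_map]
    have e3 : ∀ y : G.V, (Finset.univ.filter fun i : Fin (k - G.degree y) =>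
        ∀ v ∈ (G.double).ends (Sum.inr (Sum.inr ⟨y, i⟩)), v ∈ S).card
        = if y ∈ T then k - G.degree y else 0 := by
      intro y
      by_cases hy : y ∈ T
      · rw [if_pos hy]
        have hy1 : Sum.inl y ∈ S := by
          have := hTA hy; rw [hA, Finset.mem_filter] at this; exact this.2
        have hy2 : Sum.inr y ∈ S := by
          have := hTB hy; rw [hB, Finset.mem_filter] at this; exact this.2
        rw [Finset.filter_true_of_mem]
        · simp
        · intro i _
          intro v hv
          rw [double_ends_inrr, Sym2.mem_iff] at hv
          rcases hv with rfl | rfl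
          · exact hy1
          · exact hy2
      · rw [if_neg hy]
        rw [Finset.card_eq_zero, Finset.eq_empty_iff_forall_notMem]
        intro i hi
        rw [Finset.mem_filter] at hi
        have h1 := hi.2 (Sum.inl y) (by rw [double_ends_inrr]; exact Sym2.mem_mk_left _ _)
        have h2 := hi.2 (Sum.inr y) (by rw [double_ends_inrr]; exact Sym2.mem_mk_right _ _)
        exact hy (Finset.mem_inter.2 ⟨Finset.mem_filter.2 ⟨Finset.mem_univ _, h1⟩,
          Finset.mem_filter.2 ⟨Finset.mem_univ _, h2⟩⟩)
    rw [e1, e2]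
    rw [Finset.sum_congr rfl fun y _ => e3 y]
    rw [Finset.sum_ite_mem, Finset.univ_inter]
    ring
  -- touching sets
  set tA : Finset G.E := Finset.univ.filter
    (fun e => (∀ v ∈ G.ends e, v ∈ A) ∧ ∃ v ∈ G.ends e, v ∈ T) with htA
  set tB : Finset G.E := Finset.univ.filter
    (fun e => (∀ v ∈ G.ends e, v ∈ B) ∧ ∃ v ∈ G.ends e, v ∈ T) with htB
  have hiA : (G.edgesIn A).card ≤ (G.edgesIn (A \ T)).card + tA.card := by
    refine le_trans (Finset.card_le_card ?_) (Finset.card_union_le _ _)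
    intro e he
    rw [edgesIn, Finset.mem_filter] at he
    rw [Finset.mem_union]
    by_cases hex : ∃ v ∈ G.ends e, v ∈ T
    · right
      rw [htA, Finset.mem_filter]
      exact ⟨Finset.mem_univ _, he.2, hex⟩
    · left
      rw [edgesIn, Finset.mem_filter]
      refine ⟨Finset.mem_univ _, fun v hv => Finset.mem_sdiff.2
        ⟨he.2 v hv, fun hvT => hex ⟨v, hv, hvT⟩⟩⟩
  have hiB : (G.edgesIn B).card ≤ (G.edgesIn (B \ T)).card + tB.card := by
    refine le_trans (Finset.card_le_card ?_) (Finset.card_union_le _ _)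
    intro e he
    rw [edgesIn, Finset.mem_filter] at he
    rw [Finset.mem_union]
    by_cases hex : ∃ v ∈ G.ends e, v ∈ T
    · right
      rw [htB, Finset.mem_filter]
      exact ⟨Finset.mem_univ _, he.2, hex⟩
    · left
      rw [edgesIn, Finset.mem_filter]
      refine ⟨Finset.mem_univ _, fun v hv => Finset.mem_sdiff.2
        ⟨he.2 v hv, fun hvT => hex ⟨v, hv, hvT⟩⟩⟩
  -- the key double counting bound
  have htouch : tA.card + tB.card ≤ ∑ x ∈ T, G.degree x := by
    have hrhs : ∑ x ∈ T, G.degree x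
        = ∑ e : G.E, (T.filter fun x => x ∈ G.ends e).card := by
      calc ∑ x ∈ T, G.degree x
          = ∑ x ∈ T, ∑ e : G.E, if x ∈ G.ends e then 1 else 0 := by
            refine Finset.sum_congr rfl fun x _ => ?_
            rw [degree, Finset.card_filter]
        _ = ∑ e : G.E, ∑ x ∈ T, if x ∈ G.ends e then 1 else 0 := Finset.sum_comm
        _ = ∑ e : G.E, (T.filter fun x => x ∈ G.ends e).card :=
            Finset.sum_congr rfl fun e _ => (Finset.card_filter _ _).symm
    rw [hrhs, htA, htB, Finset.card_filter, Finset.card_filter, ← Finset.sum_add_distrib]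
    refine Finset.sum_le_sum fun e _ => ?_
    obtain ⟨x, y, hxy, hE⟩ := G.ends_pair e
    have hxe : x ∈ G.ends e := by rw [hE]; exact Sym2.mem_mk_left _ _
    have hye : y ∈ G.ends e := by rw [hE]; exact Sym2.mem_mk_right _ _
    split_ifs with h1 h2 h2
    · -- both: both endpoints lie in T
      have hxT : x ∈ T := Finset.mem_inter.2 ⟨h1.1 x hxe, h2.1 x hxe⟩
      have hyT : y ∈ T := Finset.mem_inter.2 ⟨h1.1 y hye, h2.1 y hye⟩
      have hsub : ({x, y} : Finset G.V) ⊆ T.filter fun z => z ∈ G.ends e := by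
        intro z hz
        simp only [Finset.mem_insert, Finset.mem_singleton] at hz
        rcases hz with rfl | rfl <;> exact Finset.mem_filter.2 ⟨by assumption, by assumption⟩
      calc 1 + 1 = ({x, y} : Finset G.V).card := (Finset.card_pair hxy).symm
        _ ≤ _ := Finset.card_le_card hsub
    · obtain ⟨v, hv, hvT⟩ := h1.2
      simpa using Finset.card_pos.2 ⟨v, Finset.mem_filter.2 ⟨hvT, hv⟩⟩
    · obtain ⟨v, hv, hvT⟩ := h2.2
      simpa using Finset.card_pos.2 ⟨v, Finset.mem_filter.2 ⟨hvT, hv⟩⟩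
    · simp
  -- per-part density bounds
  have hdA : (G.edgesIn (A \ T)).card ≤ k * ((A \ T).card / 2) :=
    le_trans (G.edgesIn_card_le _) (Nat.mul_le_mul_right _ (le_max_right _ _))
  have hdB : (G.edgesIn (B \ T)).card ≤ k * ((B \ T).card / 2) :=
    le_trans (G.edgesIn_card_le _) (Nat.mul_le_mul_right _ (le_max_right _ _))
  have hdegk : ∀ x ∈ T, G.degree x ≤ k := fun x _ =>
    le_trans (G.degree_le_maxDegree x) (le_max_left _ _)
  have hsumk : ∑ x ∈ T, (k - G.degree x) + ∑ x ∈ T, G.degree x = k * T.card := by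
    rw [← Finset.sum_add_distrib]
    calc ∑ x ∈ T, (k - G.degree x + G.degree x)
        = ∑ _x ∈ T, k := Finset.sum_congr rfl fun x hx => Nat.sub_add_cancel (hdegk x hx)
      _ = k * T.card := by rw [Finset.sum_const, smul_eq_mul, mul_comm]
  have hcA : A.card = (A \ T).card + T.card := (Finset.card_sdiff_add_card_eq_card hTA).symm
  have hcB : B.card = (B \ T).card + T.card := (Finset.card_sdiff_add_card_eq_card hTB).symm
  -- final arithmetic
  calc ((G.double).edgesIn S).card
      = (G.edgesIn A).card + (G.edgesIn B).card + ∑ x ∈ T, (k - G.degree x) := hEcard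
    _ ≤ ((G.edgesIn (A \ T)).card + tA.card) + ((G.edgesIn (B \ T)).card + tB.card)
        + ∑ x ∈ T, (k - G.degree x) := by gcongr
    _ ≤ (k * ((A \ T).card / 2) + tA.card) + (k * ((B \ T).card / 2) + tB.card)
        + ∑ x ∈ T, (k - G.degree x) := by gcongr
    _ = k * ((A \ T).card / 2) + k * ((B \ T).card / 2)
        + (tA.card + tB.card + ∑ x ∈ T, (k - G.degree x)) := by ring
    _ ≤ k * ((A \ T).card / 2) + k * ((B \ T).card / 2)
        + (∑ x ∈ T, G.degree x + ∑ x ∈ T, (k - G.degree x)) := by gcongr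
    _ = k * ((A \ T).card / 2) + k * ((B \ T).card / 2) + k * T.card := by
        rw [add_comm (∑ x ∈ T, G.degree x), hsumk]
    _ = k * ((A \ T).card / 2 + (B \ T).card / 2 + T.card) := by ring
    _ ≤ k * (S.card / 2) := Nat.mul_le_mul_left k (by omega)

lemma tau_double_le : (G.double).tau ≤ max G.maxDegree G.density := by
  classical
  apply Nat.sInf_le
  refine ⟨fun _ => Finset.univ, fun x => ?_, fun S => ?_⟩
  · rw [double_degree]
    simp
  · calc ((G.double).edgesIn S).card
        ≤ (max G.maxDegree G.density) * (S.card / 2) := G.double_cover S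
      _ = ∑ _i : Fin (max G.maxDegree G.density), S.card / 2 := by
          rw [Finset.sum_const, Finset.card_univ, Fintype.card_fin, smul_eq_mul]
      _ = ∑ i : Fin (max G.maxDegree G.density),
            (S.filter fun x => i ∈ (Finset.univ : Finset (Fin _))).card / 2 := by
          refine Finset.sum_congr rfl fun i _ => ?_
          rw [Finset.filter_true_of_mem fun x _ => Finset.mem_univ i]

end Aux

end Multigraph

/-- if τ is monotone on the set of all multigraphs, then for every
multigraph G, τ(G) = max(Δ(G), ω(G)). -/
theorem stmt_12
    (hmono : ∀ G H : Multigraph, Multigraph.IsSub H G → H.tau ≤ G.tau) :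
    ∀ G : Multigraph, G.tau = max G.maxDegree G.density := by
  intro G
  have hne : {c : ℕ | ∃ μ : G.V → Finset (Fin c), G.IsDegreeColoring c μ}.Nonempty := by
    obtain ⟨c, μ, h⟩ := G.coloring_exists
    exact ⟨c, μ, h⟩
  obtain ⟨μ, hμ⟩ : ∃ μ : G.V → Finset (Fin G.tau), G.IsDegreeColoring G.tau μ :=
    Nat.sInf_mem hne
  apply le_antisymm
  · exact le_trans (hmono G.double G G.isSub_double) G.tau_double_le
  · exact max_le (G.maxDegree_le_of_coloring hμ) (G.density_le_of_coloring hμ)
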